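/- Let R be a finite commutative chain ring with maximal ideal generated by π of nilpotency index ν, and S a Galois extension of R of degree m with residue field F_{q^m} and natural projection Ψ extended coefficient-by-coefficient. Let C be an F_{q^m}-linear rank metric code of length n, rank k, and minimum rank distance d, generated by g_1,…,g_k; choose g'_j ∈ S^n with Ψ(g'_j) = g_j, let C' be the S-linear code generated by g'_1,…,g'_k, and set C'' = soc(C'). Then C'' is an S-linear rank metric code of length n, rank k, and minimum rank distance d. -/

import Mathlib

open IsLocalRing

/-- The rank of a submodule `N`: the smallest number of elements generating `N`. -/
noncomputable def subrank {R M : Type*} [Semiring R] [AddCommMonoid M] [Module R M]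
    (N : Submodule R M) : ℕ :=
  sInf {k | ∃ f : Fin k → M, Submodule.span R (Set.range f) = N}

/-- The rank of a vector `u ∈ S^n` over `R`: the smallest number of generators of the
`R`-submodule of `S` generated by the coordinates of `u` (i.e. of the support of `u`). -/
noncomputable def vecrank (R : Type*) {S : Type*} {n : ℕ} [Semiring R] [AddCommMonoid S]
    [Module R S] (u : Fin n → S) : ℕ :=
  subrank (Submodule.span R (Set.range u))

/-- The minimum rank distance of a linear code `C ⊆ S^n`, ranks being taken over `K`. -/
noncomputable def minrkdist (K : Type*) {S : Type*} {n : ℕ} [Semiring K] [Ring S]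
    [Module K S] (C : Submodule S (Fin n → S)) : ℕ :=
  sInf {d | ∃ u ∈ C, ∃ v ∈ C, u ≠ v ∧ vecrank K (u - v) = d}

/-- The residue field of `S` as an algebra over the residue field of `R`, via the map
induced by `algebraMap R S`. -/
noncomputable instance residueFieldAlgebra {R S : Type*} [CommRing R] [IsLocalRing R]
    [CommRing S] [IsLocalRing S] [Algebra R S] [IsLocalHom (algebraMap R S)] :
    Algebra (ResidueField R) (ResidueField S) :=
  (ResidueField.map (algebraMap R S)).toAlgebra

/-- The socle of a submodule `C` of an ambient module, as a submodule of the ambient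
module: the sum of the minimal nonzero submodules contained in `C`. -/
noncomputable def socleIn {R M : Type*} [Semiring R] [AddCommMonoid M] [Module R M]
    (C : Submodule R M) : Submodule R M :=
  sSup {N : Submodule R M | IsAtom N ∧ N ≤ C}

section Semilin
variable {A B M N : Type*} [Semiring A] [Semiring B]
  [AddCommMonoid M] [AddCommMonoid N] [Module B M] [Module A N]
  (ρ : A → B) (e : M → N)

theorem span_image_semilin (hρ : Function.Surjective ρ)
    (h0 : e 0 = 0) (hadd : ∀ x y, e (x + y) = e x + e y)
    (hsmul : ∀ (a : A) (x : M), e (ρ a • x) = a • e x) (T : Set M) :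
    (Submodule.span A (e '' T) : Set N) = e '' (Submodule.span B T : Set M) := by
  apply Set.Subset.antisymm
  · intro y hy
    induction hy using Submodule.span_induction with
    | mem y hy => obtain ⟨x, hx, rfl⟩ := hy; exact ⟨x, Submodule.subset_span hx, rfl⟩
    | zero => exact ⟨0, (Submodule.span B T).zero_mem, h0⟩
    | add u v hu hv ihu ihv =>
        obtain ⟨x, hx, rfl⟩ := ihu; obtain ⟨x', hx', rfl⟩ := ihv
        exact ⟨x + x', add_mem hx hx', hadd x x'⟩
    | smul a u hu ihu =>
        obtain ⟨x, hx, rfl⟩ := ihu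
        exact ⟨ρ a • x, Submodule.smul_mem _ _ hx, hsmul a x⟩
  · rintro y ⟨x, hx, rfl⟩
    induction hx using Submodule.span_induction with
    | mem x hx => exact Submodule.subset_span ⟨x, hx, rfl⟩
    | zero => rw [h0]; exact Submodule.zero_mem _
    | add u v hu hv ihu ihv => rw [hadd]; exact add_mem ihu ihv
    | smul b u hu ihu =>
        obtain ⟨a, rfl⟩ := hρ b
        rw [hsmul a u]
        exact Submodule.smul_mem _ _ ihu

theorem subrank_eq_of_semilin (hρ : Function.Surjective ρ) (he : Function.Injective e)
    (h0 : e 0 = 0) (hadd : ∀ x y, e (x + y) = e x + e y)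
    (hsmul : ∀ (a : A) (x : M), e (ρ a • x) = a • e x)
    (P : Submodule B M) (Q : Submodule A N) (hQ : (Q : Set N) = e '' (P : Set M)) :
    subrank Q = subrank P := by
  unfold subrank
  congr 1
  ext j
  constructor
  · rintro ⟨f, hf⟩
    have hfi : ∀ i, ∃ x, x ∈ P ∧ e x = f i := by
      intro i
      have : f i ∈ Q := hf ▸ Submodule.subset_span ⟨i, rfl⟩
      rw [← SetLike.mem_coe, hQ] at this
      obtain ⟨x, hx, hex⟩ := this; exact ⟨x, hx, hex⟩
    choose c hc hec using hfi
    refine ⟨c, ?_⟩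
    have h1 : e '' Set.range c = Set.range f := by
      rw [← Set.range_comp]
      exact funext hec ▸ rfl
    have h2 : (Submodule.span A (e '' Set.range c) : Set N)
        = e '' (Submodule.span B (Set.range c) : Set M) :=
      span_image_semilin ρ e hρ h0 hadd hsmul _
    rw [h1, hf, hQ] at h2
    exact SetLike.coe_injective (Set.image_injective.mpr he h2.symm)
  · rintro ⟨c, hc⟩
    refine ⟨fun i => e (c i), ?_⟩
    apply SetLike.coe_injective
    have h1 : Set.range (fun i => e (c i)) = e '' Set.range c := by
      rw [← Set.range_comp]; rfl
    rw [h1, span_image_semilin ρ e hρ h0 hadd hsmul, hc, hQ]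
end Semilin

theorem subrank_eq_finrank {K V : Type*} [Field K] [AddCommGroup V] [Module K V]
    [FiniteDimensional K V] (P : Submodule K V) : subrank P = Module.finrank K P := by
  have hup : ∀ j (f : Fin j → V), Submodule.span K (Set.range f) = P →
      Module.finrank K P ≤ j := by
    intro j f hf
    have := finrank_range_le_card (R := K) f
    rw [Set.finrank, hf] at this
    simpa using this
  have hw : Module.finrank K P ∈ {j | ∃ f : Fin j → V, Submodule.span K (Set.range f) = P} := by
    have b : Module.Basis (Fin (Module.finrank K P)) K P := Module.finBasis K P
    refine ⟨fun i => (b i : V), ?_⟩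
    have : Set.range (fun i => (b i : V)) = P.subtype '' Set.range b := by
      rw [← Set.range_comp]; rfl
    rw [this, ← Submodule.map_span, b.span_eq, Submodule.map_top, Submodule.range_subtype]
  exact le_antisymm (Nat.sInf_le hw)
    (le_csInf ⟨_, hw⟩ (fun j hj => by obtain ⟨f, hf⟩ := hj; exact hup j f hf))

/-- Let `R` be a finite commutative chain ring with maximal ideal
generated by `π` of nilpotency index `ν`, `S` a Galois extension of `R` of degree `m` with
residue field `F_{q^m}` and natural projection `Ψ`.  Let `C` be an `F_{q^m}`-linear rank
metric code of length `n`, rank `k` and minimum rank distance `d`, generated by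
`g₁, …, g_k`; choose `g'ⱼ ∈ S^n` with `Ψ(g'ⱼ) = gⱼ`, let `C'` be the `S`-linear code
generated by `g'₁, …, g'_k` and `C'' = soc(C')`.  Then `C''` is an `S`-linear rank metric
code of length `n`, rank `k`, and minimum rank distance `d`. -/
theorem socle_of_lifted_code_same_rank_same_minDist
    (R S : Type*) [CommRing R] [Finite R] [IsLocalRing R] [IsPrincipalIdealRing R]
    [CommRing S] [Finite S] [IsLocalRing S] [IsPrincipalIdealRing S]
    [Algebra R S] [IsLocalHom (algebraMap R S)] [Module.Free R S]
    (π : R) (hπ : Ideal.span {π} = maximalIdeal R)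
    (ν : ℕ) (hν : 0 < ν) (hνnil : π ^ ν = 0) (hνmin : π ^ (ν - 1) ≠ 0)
    (m : ℕ) (hm : Module.finrank R S = m)
    (hGal : maximalIdeal S = Ideal.map (algebraMap R S) (maximalIdeal R))
    (n k d : ℕ) (g : Fin k → (Fin n → ResidueField S))
    (C : Submodule (ResidueField S) (Fin n → ResidueField S))
    (hC : C = Submodule.span (ResidueField S) (Set.range g))
    (hk : subrank C = k) (hd : minrkdist (ResidueField R) C = d)
    (g' : Fin k → (Fin n → S)) (hg' : ∀ j i, residue S (g' j i) = g j i)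
    (C' : Submodule S (Fin n → S)) (hC' : C' = Submodule.span S (Set.range g')) :
    subrank (socleIn C') = k ∧ minrkdist R (socleIn C') = d := by
  classical
  set πS : S := algebraMap R S π with hπS
  have hπSν : πS ^ ν = 0 := by rw [hπS, ← map_pow, hνnil, map_zero]
  have hν1 : ν - 1 + 1 = ν := Nat.succ_pred_eq_of_pos hν
  have hπS1 : πS ^ (ν - 1) ≠ 0 := by
    intro h
    apply hνmin
    have hb := Module.Free.chooseBasis R S
    obtain ⟨i⟩ := hb.index_nonempty
    have h1 : (π ^ (ν - 1)) • hb i = 0 := by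
      rw [Algebra.smul_def, map_pow, ← hπS, h, zero_mul]
    have h2 := congrArg (fun z => hb.repr z i) h1
    simpa using h2
  have hressurj : Function.Surjective (residue S) := Ideal.Quotient.mk_surjective
  have hmS : maximalIdeal S = Ideal.span {πS} := by
    rw [hGal, ← hπ, Ideal.map_span]; simp [hπS]
  have hunit : ∀ s : S, residue S s ≠ 0 → IsUnit s := by
    intro s hs
    by_contra hu
    exact hs (Ideal.Quotient.eq_zero_iff_mem.mpr ((mem_maximalIdeal s).mpr hu))
  have hker : maximalIdeal S ≤ LinearMap.ker (LinearMap.toSpanSingleton S S (πS ^ (ν - 1))) := by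
    intro s hs
    rw [hmS, Ideal.mem_span_singleton] at hs
    obtain ⟨t, rfl⟩ := hs
    rw [LinearMap.mem_ker, LinearMap.toSpanSingleton_apply, smul_eq_mul]
    calc πS * t * πS ^ (ν - 1) = t * (πS ^ (ν - 1) * πS) := by ring
    _ = t * πS ^ ν := by rw [← pow_succ, hν1]
    _ = 0 := by rw [hπSν, mul_zero]
  set lam : ResidueField S →ₗ[S] S :=
    Submodule.liftQ (maximalIdeal S) (LinearMap.toSpanSingleton S S (πS ^ (ν - 1))) hker with hlamdef
  have hlam : ∀ s : S, lam (residue S s) = s * πS ^ (ν - 1) := by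
    intro s
    rw [hlamdef]
    erw [Submodule.liftQ_apply]
    rw [LinearMap.toSpanSingleton_apply, smul_eq_mul]
  have hmul : ∀ (s : S) (y : ResidueField S), residue S s * y = s • y := by
    intro s y
    obtain ⟨t, rfl⟩ := hressurj y
    rw [← map_mul, ← smul_eq_mul]
    exact (Submodule.Quotient.mk_smul _ s t).symm
  have hlaminj : Function.Injective lam := by
    have hz : ∀ z, lam z = 0 → z = 0 := by
      intro z hz0
      obtain ⟨s, rfl⟩ := hressurj z
      rw [hlam] at hz0
      have hs : s ∈ maximalIdeal S := by
        by_contra hs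
        have hu : IsUnit s := by
          by_contra hu
          exact hs ((mem_maximalIdeal s).mpr hu)
        obtain ⟨b, hb⟩ := isUnit_iff_exists_inv'.mp hu
        apply hπS1
        calc πS ^ (ν - 1) = b * s * πS ^ (ν - 1) := by rw [hb, one_mul]
        _ = b * (s * πS ^ (ν - 1)) := by ring
        _ = 0 := by rw [hz0, mul_zero]
      exact Ideal.Quotient.eq_zero_iff_mem.mpr hs
    intro a b hab
    have := hz (a - b) (by rw [map_sub, hab, sub_self])
    exact sub_eq_zero.mp this
  have hsmulR : ∀ (r : R) (y : ResidueField S), lam (residue R r • y) = r • lam y := by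
    intro r y
    have h1 : residue R r • y = residue S (algebraMap R S r) * y := by
      rw [Algebra.smul_def]
      congr 1
    rw [h1, hmul, map_smul, algebraMap_smul]
  -- the coordinatewise lift map
  set Lam : (Fin n → ResidueField S) → (Fin n → S) := fun c i => lam (c i) with hLamdef
  have hLam0 : Lam 0 = 0 := by funext i; simp [hLamdef]
  have hLamadd : ∀ x y, Lam (x + y) = Lam x + Lam y := by
    intro x y; funext i; simp [hLamdef]
  have hLaminj : Function.Injective Lam := by
    intro a b hab
    funext i
    exact hlaminj (congrFun hab i)
  have hsmulS : ∀ (a : S) (x : Fin n → ResidueField S), Lam (residue S a • x) = a • Lam x := by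
    intro a x
    funext i
    simp only [hLamdef, Pi.smul_apply]
    rw [smul_eq_mul, hmul, map_smul]
  -- linear independence of g
  have hfinC : Module.finrank (ResidueField S) C = k := by rw [← hk, subrank_eq_finrank]
  have hgind : LinearIndependent (ResidueField S) g := by
    rw [linearIndependent_iff_card_eq_finrank_span]
    rw [Set.finrank, ← hC, hfinC, Fintype.card_fin]
  have hgind' : ∀ (c : Fin k → ResidueField S), ∑ j, c j • g j = 0 → ∀ j, c j = 0 :=
    Fintype.linearIndependent_iff.mp hgind
  -- projection of C' lands in C
  have hPSI : ∀ z ∈ C', (fun i => residue S (z i)) ∈ C := by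
    intro z hz
    rw [hC'] at hz
    obtain ⟨t, ht⟩ := (Submodule.mem_span_range_iff_exists_fun S).mp hz
    rw [hC]
    refine (Submodule.mem_span_range_iff_exists_fun _).mpr ⟨fun j => residue S (t j), ?_⟩
    funext i
    rw [← ht]
    simp only [Finset.sum_apply, Pi.smul_apply, smul_eq_mul, map_sum, map_mul]
    exact Finset.sum_congr rfl fun j _ => by rw [hg']
  -- the key computation
  have hKEY : ∀ x, x ∈ C' → πS • x = 0 → x ∈ Lam '' (C : Set (Fin n → ResidueField S)) := by
    intro x hx hxkill
    rw [hC'] at hx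
    obtain ⟨t, ht⟩ := (Submodule.mem_span_range_iff_exists_fun S).mp hx
    by_cases h0 : ∀ j, t j = 0
    · refine ⟨0, C.zero_mem, ?_⟩
      rw [hLam0, ← ht]
      symm
      funext i
      simp [h0]
    · push_neg at h0
      obtain ⟨j0, hj0⟩ := h0
      have hQ : ∃ b, ∃ j, ¬ (πS ^ (b + 1) ∣ t j) := by
        refine ⟨ν - 1, j0, ?_⟩
        rw [hν1, hπSν]
        intro hdvd
        exact hj0 (zero_dvd_iff.mp hdvd)
      set a := Nat.find hQ with hadef
      obtain ⟨j1, hj1⟩ := Nat.find_spec hQ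
      have hdvd : ∀ j, πS ^ a ∣ t j := by
        intro j
        rcases Nat.eq_zero_or_pos a with h | h
        · rw [h, pow_zero]; exact one_dvd _
        · have := Nat.find_min hQ (m := a - 1) (by omega)
          push_neg at this
          have h2 := this j
          rwa [Nat.sub_add_cancel h] at h2
      choose w hw using hdvd
      have hwu : residue S (w j1) ≠ 0 := by
        intro hres
        apply hj1
        have : w j1 ∈ maximalIdeal S := Ideal.Quotient.eq_zero_iff_mem.mp hres
        rw [hmS, Ideal.mem_span_singleton] at this
        obtain ⟨v, hv⟩ := this
        refine ⟨v, ?_⟩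
        rw [hw j1, hv, pow_succ]
        ring
      set y : Fin n → S := ∑ j, w j • g' j with hydef
      have hyC' : y ∈ C' := by
        rw [hC']
        exact (Submodule.mem_span_range_iff_exists_fun S).mpr ⟨w, rfl⟩
      have hxy : x = (πS ^ a) • y := by
        rw [← ht, hydef, Finset.smul_sum]
        exact Finset.sum_congr rfl fun j _ => by rw [hw j, mul_smul]
      have hyres : ∃ i, residue S (y i) ≠ 0 := by
        by_contra hall
        push_neg at hall
        have hsum : ∑ j, residue S (w j) • g j = 0 := by
          funext i
          simp only [Finset.sum_apply, Pi.smul_apply, smul_eq_mul, Pi.zero_apply]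
          have : residue S (y i) = 0 := hall i
          rw [hydef] at this
          simp only [Finset.sum_apply, Pi.smul_apply, smul_eq_mul, map_sum, map_mul] at this
          rw [← this]
          exact Finset.sum_congr rfl fun j _ => by rw [hg']
        exact hwu (hgind' _ hsum j1)
      obtain ⟨i1, hi1⟩ := hyres
      obtain ⟨b, hb⟩ := isUnit_iff_exists_inv.mp (hunit _ hi1)
      have han : πS ^ (a + 1) = 0 := by
        have h1 : (πS • x) i1 = 0 := by rw [hxkill]; rfl
        rw [hxy] at h1
        simp only [Pi.smul_apply, smul_eq_mul] at h1
        calc πS ^ (a + 1) = πS ^ (a + 1) * (y i1 * b) := by rw [hb, mul_one]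
        _ = (πS * (πS ^ a * y i1)) * b := by ring
        _ = 0 := by rw [h1, zero_mul]
      have hage : ν - 1 ≤ a := by
        by_contra hlt
        push_neg at hlt
        apply hπS1
        have : ν - 1 = (a + 1) + (ν - 1 - (a + 1)) := by omega
        rw [this, pow_add, han, zero_mul]
      set z : Fin n → S := (πS ^ (a - (ν - 1))) • y with hzdef
      have hzC' : z ∈ C' := Submodule.smul_mem _ _ hyC'
      have hxz : x = (πS ^ (ν - 1)) • z := by
        rw [hzdef, hxy, smul_smul, ← pow_add]
        congr 2
        omega
      refine ⟨fun i => residue S (z i), hPSI z hzC', ?_⟩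
      funext i
      rw [hLamdef]
      simp only []
      rw [hlam, hxz]
      simp only [Pi.smul_apply, smul_eq_mul]
      ring
  -- Lam of C lands in C'
  have hLamg : ∀ j, Lam (g j) = (πS ^ (ν - 1)) • g' j := by
    intro j
    funext i
    rw [hLamdef]
    simp only [Pi.smul_apply, smul_eq_mul]
    rw [← hg', hlam]
    ring
  have hLamCsub : Lam '' (C : Set (Fin n → ResidueField S)) ⊆ (C' : Set (Fin n → S)) := by
    have h1 : (Submodule.span S (Lam '' Set.range g) : Set (Fin n → S))
        = Lam '' (Submodule.span (ResidueField S) (Set.range g) : Set _) :=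
      span_image_semilin (residue S) Lam hressurj hLam0 hLamadd hsmulS _
    rw [← hC] at h1
    rw [← h1]
    have h2 : Submodule.span S (Lam '' Set.range g) ≤ C' := by
      rw [Submodule.span_le]
      rintro _ ⟨_, ⟨j, rfl⟩, rfl⟩
      rw [hLamg j]
      refine Submodule.smul_mem _ _ ?_
      rw [hC']
      exact Submodule.subset_span ⟨j, rfl⟩
    exact h2
  have hLamkill : ∀ c, πS • Lam c = 0 := by
    intro c
    funext i
    obtain ⟨s, hs⟩ := hressurj (c i)
    simp only [Pi.smul_apply, smul_eq_mul, Pi.zero_apply, hLamdef]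
    rw [← hs, hlam]
    calc πS * (s * πS ^ (ν - 1)) = s * (πS ^ (ν - 1) * πS) := by ring
    _ = 0 := by rw [← pow_succ, hν1, hπSν, mul_zero]
  -- the socle carrier
  set D : Submodule S (Fin n → S) := Submodule.span S (Lam '' (C : Set _)) with hDdef
  have hD : (D : Set (Fin n → S)) = Lam '' (C : Set _) := by
    rw [hDdef, span_image_semilin (residue S) Lam hressurj hLam0 hLamadd hsmulS, Submodule.span_eq]
  have hsoc1 : socleIn C' ≤ D := by
    refine sSup_le fun N hN => ?_
    obtain ⟨hat, hle⟩ := hN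
    intro x hx
    -- atoms are killed by πS
    have hPbot : N.map (πS • (LinearMap.id : (Fin n → S) →ₗ[S] (Fin n → S))) = ⊥ := by
      have hPle : N.map (πS • (LinearMap.id : (Fin n → S) →ₗ[S] (Fin n → S))) ≤ N := by
        rintro _ ⟨y, hy, rfl⟩
        simpa using N.smul_mem πS hy
      rcases eq_or_lt_of_le hPle with heq | hlt
      · exfalso
        have hiter : ∀ j : ℕ, N.map ((πS ^ j) • (LinearMap.id : (Fin n → S) →ₗ[S] (Fin n → S))) = N := by
          intro j
          induction j with
          | zero => simp
          | succ j ih =>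
            have hcomp : ((πS • (LinearMap.id : (Fin n → S) →ₗ[S] (Fin n → S))).comp
                ((πS ^ j) • (LinearMap.id : (Fin n → S) →ₗ[S] (Fin n → S))))
                = (πS ^ (j + 1)) • LinearMap.id := by
              ext x
              simp [smul_smul, pow_succ]
              ring_nf
            rw [← hcomp, Submodule.map_comp, ih, heq]
        have := hiter ν
        rw [hπSν, zero_smul, Submodule.map_zero] at this
        exact hat.1 this.symm
      · exact hat.2 _ hlt
    have hxkill : πS • x = 0 := by
      have : (πS • (LinearMap.id : (Fin n → S) →ₗ[S] (Fin n → S))) x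
          ∈ N.map (πS • (LinearMap.id : (Fin n → S) →ₗ[S] (Fin n → S))) :=
        Submodule.mem_map_of_mem hx
      rw [hPbot] at this
      simpa using this
    have : x ∈ Lam '' (C : Set _) := hKEY x (hle hx) hxkill
    rw [← SetLike.mem_coe, hD]
    exact this
  have hsoc2 : D ≤ socleIn C' := by
    intro x hx
    have hx' : x ∈ Lam '' (C : Set _) := by rw [← hD]; exact hx
    by_cases hx0 : x = 0
    · rw [hx0]; exact Submodule.zero_mem _
    · have hxC' : x ∈ C' := hLamCsub hx'
      have hxkill : πS • x = 0 := by
        obtain ⟨c, _, rfl⟩ := hx'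
        exact hLamkill c
      have hatom : IsAtom (Submodule.span S ({x} : Set (Fin n → S))) := by
        constructor
        · intro h
          exact hx0 (Submodule.span_singleton_eq_bot.mp h)
        · intro b hb
          rw [eq_bot_iff]
          intro y hy
          have hy' : y ∈ Submodule.span S ({x} : Set (Fin n → S)) := hb.le hy
          obtain ⟨s, rfl⟩ := Submodule.mem_span_singleton.mp hy'
          by_cases hsu : IsUnit s
          · exfalso
            obtain ⟨u, rfl⟩ := hsu
            have hxb : x ∈ b := by
              have : x = (↑u⁻¹ : S) • ((u : S) • x) := by
                rw [smul_smul, Units.inv_mul, one_smul]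
              rw [this]
              exact b.smul_mem _ hy
            exact hb.ne (le_antisymm hb.le ((Submodule.span_singleton_le_iff_mem _ _).mpr hxb))
          · have hs : s ∈ maximalIdeal S := (mem_maximalIdeal s).mpr hsu
            rw [hmS, Ideal.mem_span_singleton] at hs
            obtain ⟨v, rfl⟩ := hs
            have : (πS * v) • x = 0 := by
              rw [mul_comm, mul_smul, hxkill, smul_zero]
            simp [this]
      have hspanle : Submodule.span S ({x} : Set (Fin n → S)) ≤ C' :=
        (Submodule.span_singleton_le_iff_mem _ _).mpr hxC'
      have hle2 : Submodule.span S ({x} : Set (Fin n → S)) ≤ socleIn C' :=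
        le_sSup ⟨hatom, hspanle⟩
      exact hle2 (Submodule.mem_span_singleton_self x)
  have hsoceq : socleIn C' = D := le_antisymm hsoc1 hsoc2
  have hsoc : ((socleIn C' : Submodule S (Fin n → S)) : Set (Fin n → S)) = Lam '' (C : Set _) := by
    rw [hsoceq, hD]
  -- first conclusion
  have hrank : subrank (socleIn C') = k := by
    rw [subrank_eq_of_semilin (residue S) Lam hressurj hLaminj hLam0 hLamadd hsmulS C
      (socleIn C') hsoc, hk]
  refine ⟨hrank, ?_⟩
  -- vecrank correspondence
  have hvr : ∀ c : Fin n → ResidueField S, vecrank R (Lam c) = vecrank (ResidueField R) c := by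
    intro c
    unfold vecrank
    refine subrank_eq_of_semilin (residue R) lam Ideal.Quotient.mk_surjective hlaminj
      (map_zero lam) (map_add lam) (fun r y => by obtain ⟨t, rfl⟩ := hressurj y; rw [← hsmulR]; congr 1; rw [@Algebra.smul_def _ _ _ _ residueFieldAlgebra, RingHom.algebraMap_toAlgebra, ResidueField.map_residue]; exact @Algebra.smul_def _ _ _ _ (Ideal.Quotient.algebraOfLiesOver (maximalIdeal S) (maximalIdeal R)) _ _) _ _ ?_
    have h1 : Set.range (Lam c) = lam '' Set.range c := by
      rw [hLamdef, ← Set.range_comp]; rfl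
    rw [h1, span_image_semilin (residue R) lam Ideal.Quotient.mk_surjective
      (map_zero lam) (map_add lam) (fun r y => by obtain ⟨t, rfl⟩ := hressurj y; rw [← hsmulR]; congr 1; rw [@Algebra.smul_def _ _ _ _ residueFieldAlgebra, RingHom.algebraMap_toAlgebra, ResidueField.map_residue]; exact @Algebra.smul_def _ _ _ _ (Ideal.Quotient.algebraOfLiesOver (maximalIdeal S) (maximalIdeal R)) _ _)]
  have hLamsub : ∀ c c' : Fin n → ResidueField S, Lam c - Lam c' = Lam (c - c') := by
    intro c c'
    funext i
    simp [hLamdef]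
  -- second conclusion
  rw [← hd]
  unfold minrkdist
  congr 1
  ext δ
  constructor
  · rintro ⟨u, hu, v, hv, huv, hrk⟩
    rw [← SetLike.mem_coe, hsoc] at hu hv
    obtain ⟨c, hc, rfl⟩ := hu
    obtain ⟨c', hc', rfl⟩ := hv
    refine ⟨c, hc, c', hc', fun h => huv (by rw [h]), ?_⟩
    rw [hLamsub, hvr] at hrk
    exact hrk
  · rintro ⟨u, hu, v, hv, huv, hrk⟩
    refine ⟨Lam u, ?_, Lam v, ?_, fun h => huv (hLaminj h), ?_⟩
    · rw [← SetLike.mem_coe, hsoc]; exact ⟨u, hu, rfl⟩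
    · rw [← SetLike.mem_coe, hsoc]; exact ⟨v, hv, rfl⟩
    · rw [hLamsub, hvr]; exact hrk
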